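/- arXiv:2211.13521 — 2 statements merged into one kernel-verified Lean document; each statement's English description precedes it below -/
import Mathlib

section
/- For every integer d ≥ 1 and reals m > 0, r₀ > 0, t > 0, and every x ∈ ℝ^d with ‖x‖ < r₀λ(t), the function ρ(x,t) = λ(t)^{−d} (1 − (‖x‖/(r₀λ(t)))²)^{1/m} satisfies the porous medium equation ∂ρ/∂t(x,t) = Δ_x(ρ^{m+1}/(m+1))(x,t), where Δ_x denotes the spatial Laplacian (the sum of the second partial derivatives with respect to the components of x). -/
open MeasureTheory

/-- The spatial Laplacian: the sum of the second partial derivatives with respect to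
the components of `x`. -/
noncomputable def spatialLaplacian {d : ℕ} (f : EuclideanSpace ℝ (Fin d) → ℝ)
    (x : EuclideanSpace ℝ (Fin d)) : ℝ :=
  ∑ i : Fin d, fderiv ℝ (fun y => fderiv ℝ f y (EuclideanSpace.single i 1)) x
    (EuclideanSpace.single i 1)

/-- `t₀ = r₀² m / (2(2+dm))`. -/
noncomputable def barenblattT0 (d : ℕ) (m r₀ : ℝ) : ℝ :=
  r₀ ^ 2 * m / (2 * (2 + d * m))

/-- `λ(t) = (t/t₀)^{1/(2+dm)}`. -/
noncomputable def barenblattLambda (d : ℕ) (m r₀ t : ℝ) : ℝ :=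
  (t / barenblattT0 d m r₀) ^ ((1 : ℝ) / (2 + d * m))

/-- The Barenblatt similarity profile `ρ(x,t) = λ(t)^{-d} (1 - (‖x‖/(r₀λ(t)))²)^{1/m}`. -/
noncomputable def barenblatt (d : ℕ) (m r₀ : ℝ) (x : EuclideanSpace ℝ (Fin d)) (t : ℝ) : ℝ :=
  barenblattLambda d m r₀ t ^ (-(d : ℝ)) *
    (1 - (‖x‖ / (r₀ * barenblattLambda d m r₀ t)) ^ 2) ^ ((1 : ℝ) / m)

set_option maxHeartbeats 1000000 in
/-- For every integer `d ≥ 1`, reals `m > 0`, `r₀ > 0`, `t > 0` and every `x ∈ ℝ^d` with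
`‖x‖ < r₀ λ(t)`, the Barenblatt similarity solution satisfies the porous medium equation
`∂ρ/∂t(x,t) = Δ_x(ρ^{m+1}/(m+1))(x,t)`. -/
theorem barenblatt_satisfies_PME (d : ℕ) (hd : 1 ≤ d) (m r₀ t : ℝ)
    (hm : 0 < m) (hr₀ : 0 < r₀) (ht : 0 < t)
    (x : EuclideanSpace ℝ (Fin d)) (hx : ‖x‖ < r₀ * barenblattLambda d m r₀ t) :
    deriv (fun s => barenblatt d m r₀ x s) t
      = spatialLaplacian (fun y => barenblatt d m r₀ y t ^ (m + 1) / (m + 1)) x := by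
  have hdm : (0:ℝ) < 2 + d * m := by positivity
  have ht₀ : 0 < barenblattT0 d m r₀ := by
    unfold barenblattT0; positivity
  have htt₀ : 0 < t / barenblattT0 d m r₀ := div_pos ht ht₀
  set L := barenblattLambda d m r₀ t with hLdef
  have hL : 0 < L := Real.rpow_pos_of_pos htt₀ _
  have hR : 0 < r₀ * L := mul_pos hr₀ hL
  set A : ℝ := (‖x‖ / r₀) ^ 2 with hAdef
  set u : ℝ := 1 - A / L ^ 2 with hudef
  have hkey : ∀ l : ℝ, (‖x‖ / (r₀ * l)) ^ 2 = A / l ^ 2 := by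
    intro l; rw [hAdef, div_pow, div_pow, mul_pow, div_div]
  have hu : 0 < u := by
    rw [hudef, ← hkey L]
    have h1 : ‖x‖ / (r₀ * L) < 1 := (div_lt_one hR).2 hx
    have h0 : 0 ≤ ‖x‖ / (r₀ * L) := by positivity
    nlinarith
  set mi : ℝ := 1 / m with hmidef
  -- time derivative of lambda
  have hlam : HasDerivAt (fun s => barenblattLambda d m r₀ s) (1 / (2 + d*m) * L / t) t := by
    have h0 : HasDerivAt (fun s : ℝ => s / barenblattT0 d m r₀) (1 / barenblattT0 d m r₀) t := by
      simpa using (hasDerivAt_id t).div_const (barenblattT0 d m r₀)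
    have h1 := h0.rpow_const (p := (1:ℝ) / (2 + d*m)) (Or.inl htt₀.ne')
    have h2 : (fun s : ℝ => (s / barenblattT0 d m r₀) ^ ((1:ℝ)/(2 + d*m)))
        = fun s => barenblattLambda d m r₀ s := rfl
    rw [h2] at h1
    convert h1 using 1
    rw [Real.rpow_sub htt₀, Real.rpow_one]
    have hLval : L = (t / barenblattT0 d m r₀) ^ ((1:ℝ)/(2 + (d:ℝ)*m)) := rfl
    rw [hLval]
    field_simp
  -- derivative of the profile in l
  have hsq : HasDerivAt (fun l : ℝ => l ^ 2) (2 * L) L := by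
    simpa using hasDerivAt_pow 2 L
  have h2 : HasDerivAt (fun l : ℝ => 1 - A / l ^ 2) (2 * A / L ^ 3) L := by
    have hdiv := (hasDerivAt_const L A).div hsq (by positivity)
    have h3 := (hasDerivAt_const L (1:ℝ)).sub hdiv
    refine h3.congr_deriv ?_
    field_simp
    ring
  have h4 : HasDerivAt (fun l : ℝ => (1 - A / l ^ 2) ^ mi)
      (2 * A / L ^ 3 * mi * u ^ (mi - 1)) L := h2.rpow_const (Or.inl hu.ne')
  have h1d : HasDerivAt (fun l : ℝ => l ^ (-(d:ℝ))) (-(d:ℝ) * L ^ (-(d:ℝ) - 1)) L :=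
    Real.hasDerivAt_rpow_const (Or.inl hL.ne')
  have hP : HasDerivAt (fun l : ℝ => l ^ (-(d:ℝ)) * (1 - A / l ^ 2) ^ mi)
      (-(d:ℝ) * L ^ (-(d:ℝ) - 1) * u ^ mi
        + L ^ (-(d:ℝ)) * (2 * A / L ^ 3 * mi * u ^ (mi - 1))) L := h1d.mul h4
  have htime : deriv (fun s => barenblatt d m r₀ x s) t
      = (-(d:ℝ) * L ^ (-(d:ℝ) - 1) * u ^ mi
          + L ^ (-(d:ℝ)) * (2 * A / L ^ 3 * mi * u ^ (mi - 1)))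
        * (1 / (2 + d*m) * L / t) := by
    have hcomp := hP.comp t hlam
    have heq : (fun s => barenblatt d m r₀ x s)
        = (fun l : ℝ => l ^ (-(d:ℝ)) * (1 - A / l ^ 2) ^ mi)
          ∘ (fun s => barenblattLambda d m r₀ s) := by
      funext s
      simp only [Function.comp_apply, barenblatt]
      rw [hkey]
    rw [heq]
    exact hcomp.deriv
  -- spatial side
  set c : ℝ := 1 / (r₀ * L) ^ 2 with hcdef
  set q : ℝ := mi * (m + 1) with hqdef
  set K : ℝ := L ^ (-(d:ℝ) * (m + 1)) / (m + 1) with hKdef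
  set f : EuclideanSpace ℝ (Fin d) → ℝ :=
    fun y => barenblatt d m r₀ y t ^ (m + 1) / (m + 1) with hfdef
  set φ : ℝ → ℝ := fun s => K * (1 - c * s) ^ q with hφdef
  set φ₁ : ℝ → ℝ := fun s => K * q * -c * (1 - c * s) ^ (q - 1) with hφ₁def
  set φ₂ : ℝ → ℝ := fun s => K * q * -c * ((1 - c * s) ^ (q - 1 - 1) * (q - 1) * -c)
    with hφ₂def
  set S : EuclideanSpace ℝ (Fin d) → ℝ := fun y => ‖y‖ ^ 2 with hSdef
  have hS : ∀ y : EuclideanSpace ℝ (Fin d), HasFDerivAt S (2 • innerSL ℝ y) y := fun y =>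
    (hasStrictFDerivAt_norm_sq y).hasFDerivAt
  have hcS : ∀ y : EuclideanSpace ℝ (Fin d), c * S y = (‖y‖ / (r₀ * L)) ^ 2 := by
    intro y
    simp only [hSdef, hcdef, div_pow]
    ring
  have hball : ∀ y : EuclideanSpace ℝ (Fin d), ‖y‖ < r₀ * L → (0:ℝ) < 1 - c * S y := by
    intro y hy
    rw [hcS y]
    have h1 : ‖y‖ / (r₀ * L) < 1 := (div_lt_one hR).2 hy
    have h0 : 0 ≤ ‖y‖ / (r₀ * L) := by positivity
    nlinarith
  have hφd : ∀ s : ℝ, 0 < 1 - c * s → HasDerivAt φ (φ₁ s) s := by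
    intro s hs
    have h0 : HasDerivAt (fun s : ℝ => 1 - c * s) (-c) s := by
      simpa using ((hasDerivAt_id s).const_mul c).const_sub 1
    have h1 := (h0.rpow_const (p := q) (Or.inl hs.ne')).const_mul K
    refine h1.congr_deriv ?_
    simp only [hφ₁def]
    ring
  have hφ₁d : ∀ s : ℝ, 0 < 1 - c * s → HasDerivAt φ₁ (φ₂ s) s := by
    intro s hs
    have h0 : HasDerivAt (fun s : ℝ => 1 - c * s) (-c) s := by
      simpa using ((hasDerivAt_id s).const_mul c).const_sub 1
    have h1 := (h0.rpow_const (p := q - 1) (Or.inl hs.ne')).const_mul (K * q * -c)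
    refine h1.congr_deriv ?_
    simp only [hφ₂def]
    ring
  have hfφ : ∀ y : EuclideanSpace ℝ (Fin d), ‖y‖ < r₀ * L → f y = φ (S y) := by
    intro y hy
    have huy : (0:ℝ) < 1 - c * S y := hball y hy
    have huy' : (0:ℝ) < 1 - (‖y‖ / (r₀ * L)) ^ 2 := by rwa [hcS y] at huy
    simp only [hfdef, hφdef, barenblatt, ← hLdef, hcS y]
    rw [Real.mul_rpow (Real.rpow_nonneg hL.le _) (Real.rpow_nonneg huy'.le _),
      ← Real.rpow_mul hL.le, ← Real.rpow_mul huy'.le]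
    rw [hKdef, hqdef, hmidef]
    ring
  have hfd : ∀ y : EuclideanSpace ℝ (Fin d), ‖y‖ < r₀ * L →
      HasFDerivAt f (φ₁ (S y) • (2 • innerSL ℝ y)) y := by
    intro y hy
    have hcomp : HasFDerivAt (φ ∘ S) (φ₁ (S y) • (2 • innerSL ℝ y)) y :=
      (hφd (S y) (hball y hy)).comp_hasFDerivAt y (hS y)
    apply hcomp.congr_of_eventuallyEq
    filter_upwards [Metric.isOpen_ball.mem_nhds (mem_ball_zero_iff.2 hy)] with z hz
    exact hfφ z (mem_ball_zero_iff.1 hz)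
  have hGi : ∀ i : Fin d, (fun y => fderiv ℝ f y (EuclideanSpace.single i 1))
      =ᶠ[nhds x] fun y => φ₁ (S y) * (2 * y i) := by
    intro i
    filter_upwards [Metric.isOpen_ball.mem_nhds (mem_ball_zero_iff.2 hx)] with y hy
    rw [(hfd y (mem_ball_zero_iff.1 hy)).fderiv]
    simp [EuclideanSpace.inner_single_right]
  have hprod : ∀ i : Fin d,
      HasFDerivAt (fun y : EuclideanSpace ℝ (Fin d) => φ₁ (S y) * (2 * y i))
        (φ₁ (S x) • ((2:ℝ) • (PiLp.proj (𝕜 := ℝ) 2 (fun _ : Fin d => ℝ) i))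
          + (2 * x i) • (φ₂ (S x) • (2 • innerSL ℝ x))) x := by
    intro i
    have h1 : HasFDerivAt (fun y => φ₁ (S y)) (φ₂ (S x) • (2 • innerSL ℝ x)) x :=
      (hφ₁d (S x) (hball x hx)).comp_hasFDerivAt x (hS x)
    have h2 : HasFDerivAt (fun y : EuclideanSpace ℝ (Fin d) => 2 * y i)
        ((2:ℝ) • (PiLp.proj (𝕜 := ℝ) 2 (fun _ : Fin d => ℝ) i)) x := by
      exact (PiLp.hasFDerivAt_apply 2 x i).const_mul (2:ℝ)
    exact h1.mul h2
  have hlap : ∀ i : Fin d,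
      fderiv ℝ (fun y => fderiv ℝ f y (EuclideanSpace.single i 1)) x (EuclideanSpace.single i 1)
        = 2 * φ₁ (S x) + φ₂ (S x) * (2 * x i) * (2 * x i) := by
    intro i
    rw [(hGi i).fderiv_eq, (hprod i).fderiv]
    simp [EuclideanSpace.inner_single_right, EuclideanSpace.single_apply, PiLp.proj_apply]
    ring
  have hSx : S x = ∑ i : Fin d, (x i) ^ 2 := by
    simp only [hSdef]
    rw [EuclideanSpace.norm_eq, Real.sq_sqrt (by positivity)]
    simp [Real.norm_eq_abs, sq_abs]
  have hsum : spatialLaplacian f x = 2 * (d:ℝ) * φ₁ (S x) + 4 * φ₂ (S x) * S x := by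
    unfold spatialLaplacian
    rw [Finset.sum_congr rfl (fun i _ => hlap i), Finset.sum_add_distrib,
      Finset.sum_const, Finset.card_univ, Fintype.card_fin]
    have h5 : ∀ i : Fin d, φ₂ (S x) * (2 * x i) * (2 * x i) = 4 * φ₂ (S x) * (x i)^2 := by
      intro i; ring
    rw [Finset.sum_congr rfl (fun i _ => h5 i), ← Finset.mul_sum, ← hSx]
    ring
  -- put everything together
  rw [htime, hsum]
  have hu' : 1 - c * S x = u := by rw [hudef, hcS x, hkey L]
  have hq1 : q - 1 = mi := by rw [hqdef, hmidef]; field_simp; ring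
  have e1 : L ^ (-(d:ℝ) - 1) = L ^ (-(d:ℝ)) / L := by
    rw [Real.rpow_sub hL, Real.rpow_one]
  have hpow : L ^ ((2:ℝ) + d*m) = t / barenblattT0 d m r₀ := by
    have hLval : L = (t / barenblattT0 d m r₀) ^ ((1:ℝ)/(2 + (d:ℝ)*m)) := rfl
    rw [hLval, ← Real.rpow_mul htt₀.le, one_div, inv_mul_cancel₀ hdm.ne', Real.rpow_one]
  have e2 : L ^ (-(d:ℝ) * (m + 1))
      = L ^ (-(d:ℝ)) * L ^ 2 / (t / barenblattT0 d m r₀) := by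
    rw [show -(d:ℝ) * (m + 1) = (-(d:ℝ) + 2) - ((2:ℝ) + d*m) by ring,
      Real.rpow_sub hL, Real.rpow_add hL, hpow, Real.rpow_two]
  simp only [hφ₁def, hφ₂def, hu', hq1, hKdef, e2, e1]
  rw [hqdef, hmidef, hcdef, hAdef]
  unfold barenblattT0
  have hm1 : (0:ℝ) < m + 1 := by linarith
  field_simp
  ring
end

section
/- Reynolds transport theorem: let d ≥ 1, let Ω ⊂ ℝ^d be a bounded open set, let v : ℝ^d × ℝ → ℝ^d be continuously differentiable, and let Φ : ℝ^d × ℝ → ℝ^d be continuously differentiable (jointly in (ξ,t)) with Φ(ξ, 0) = ξ, such that for each t the map ξ ↦ Φ(ξ, t) is injective with invertible spatial differential at every point, and ∂Φ/∂t(ξ, t) = v(Φ(ξ, t), t) for all (ξ, t). Let f : ℝ^d × ℝ → ℝ be continuously differentiable. Then for every t the function s ↦ ∫_{Φ(Ω, s)} f(x, s) dx is differentiable at t with derivative ∫_{Φ(Ω, t)} [ ∂f/∂t(x, t) + div_x( f(·, t) v(·, t) )(x) ] dx, where Φ(Ω, s) = { Φ(ξ, s) : ξ ∈ Ω } and div_x(f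 v) = ∇_x f · v + f div_x v. -/
open MeasureTheory Set

/-- Derivative of the determinant of a matrix-valued path. -/
lemma hasDerivAt_matrix_det {d : ℕ} {M : ℝ → Matrix (Fin d) (Fin d) ℝ}
    {N : Matrix (Fin d) (Fin d) ℝ} {t : ℝ}
    (h : ∀ i j, HasDerivAt (fun s => M s i j) (N i j) t) :
    HasDerivAt (fun s => (M s).det)
      (∑ i, ((M t).updateRow i (N i)).det) t := by
  have h1 : HasDerivAt (fun s => ∑ σ : Equiv.Perm (Fin d),
      (Equiv.Perm.sign σ : ℝ) * ∏ j, M s (σ j) j)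
      (∑ σ : Equiv.Perm (Fin d), (Equiv.Perm.sign σ : ℝ) *
        ∑ j, (∏ j' ∈ Finset.univ.erase j, M t (σ j') j') * N (σ j) j) t := by
    refine HasDerivAt.fun_sum fun σ _ => ?_
    have := HasDerivAt.fun_finsetProd (u := Finset.univ)
      (f := fun j s => M s (σ j) j) (f' := fun j => N (σ j) j)
      (fun j _ => h (σ j) j)
    simpa [smul_eq_mul] using this.const_mul ((Equiv.Perm.sign σ : ℝ))
  have h2 : (∑ σ : Equiv.Perm (Fin d), (Equiv.Perm.sign σ : ℝ) *
        ∑ j, (∏ j' ∈ Finset.univ.erase j, M t (σ j') j') * N (σ j) j)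
      = ∑ i, ((M t).updateRow i (N i)).det := by
    have inner : ∀ (σ : Equiv.Perm (Fin d)) (j : Fin d),
        (∏ j' ∈ Finset.univ.erase j, M t (σ j') j') * N (σ j) j
          = ∏ j', ((M t).updateRow (σ j) (N (σ j))) (σ j') j' := by
      intro σ j
      rw [← Finset.mul_prod_erase Finset.univ _ (Finset.mem_univ j)]
      rw [Matrix.updateRow_self, mul_comm]
      congr 1
      refine Finset.prod_congr rfl fun j' hj' => ?_
      have : σ j' ≠ σ j := fun hc => (Finset.mem_erase.1 hj').1 (σ.injective hc)
      rw [Matrix.updateRow_ne this]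
    calc ∑ σ : Equiv.Perm (Fin d), (Equiv.Perm.sign σ : ℝ) *
        ∑ j, (∏ j' ∈ Finset.univ.erase j, M t (σ j') j') * N (σ j) j
        = ∑ σ : Equiv.Perm (Fin d), ∑ i, (Equiv.Perm.sign σ : ℝ) *
            ∏ j', ((M t).updateRow i (N i)) (σ j') j' := by
          refine Finset.sum_congr rfl fun σ _ => ?_
          rw [Finset.mul_sum]
          calc ∑ j, (Equiv.Perm.sign σ : ℝ) *
              ((∏ j' ∈ Finset.univ.erase j, M t (σ j') j') * N (σ j) j)
              = ∑ j, (fun i => (Equiv.Perm.sign σ : ℝ) *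
                  ∏ j', ((M t).updateRow i (N i)) (σ j') j') (σ j) := by
                refine Finset.sum_congr rfl fun j _ => ?_
                rw [inner σ j]
            _ = _ := by
                exact Equiv.sum_comp σ (fun i => (Equiv.Perm.sign σ : ℝ) *
                  ∏ j', ((M t).updateRow i (N i)) (σ j') j')
      _ = ∑ i, ((M t).updateRow i (N i)).det := by
          rw [Finset.sum_comm]
          refine Finset.sum_congr rfl fun i _ => ?_
          rw [Matrix.det_apply']
  have := h1.congr_deriv h2
  refine this.congr_of_eventuallyEq ?_
  filter_upwards with s
  rw [Matrix.det_apply']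

lemma sum_det_updateRow_mul {d : ℕ} (C M : Matrix (Fin d) (Fin d) ℝ) :
    ∑ i, (M.updateRow i ((C * M) i)).det = (∑ i, C i i) * M.det := by
  rw [Finset.sum_mul]
  refine Finset.sum_congr rfl fun i _ => ?_
  have hrow : (C * M) i = ∑ k, C i k • M k := by
    ext j
    simp [Matrix.mul_apply]
  rw [hrow, Matrix.det_updateRow_sum, smul_eq_mul]

/-- Jacobi's formula for a path of continuous linear maps satisfying `A' = L ∘ A`. -/
lemma hasDerivAt_clm_det {d : ℕ}
    {A : ℝ → (EuclideanSpace ℝ (Fin d) →L[ℝ] EuclideanSpace ℝ (Fin d))}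
    {L : EuclideanSpace ℝ (Fin d) →L[ℝ] EuclideanSpace ℝ (Fin d)} {t : ℝ}
    (hA : HasDerivAt A (L ∘L A t) t) :
    HasDerivAt (fun s => (A s).det)
      ((∑ i, L (EuclideanSpace.single i 1) i) * (A t).det) t := by
  classical
  set b := (EuclideanSpace.basisFun (Fin d) ℝ).toBasis with hb
  set M : ℝ → Matrix (Fin d) (Fin d) ℝ :=
    fun s => LinearMap.toMatrix b b (A s : EuclideanSpace ℝ (Fin d) →ₗ[ℝ] EuclideanSpace ℝ (Fin d))
    with hM
  set N : Matrix (Fin d) (Fin d) ℝ :=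
    LinearMap.toMatrix b b ((L ∘L A t : _ →L[ℝ] _) :
      EuclideanSpace ℝ (Fin d) →ₗ[ℝ] EuclideanSpace ℝ (Fin d)) with hN
  have hdet : ∀ s, (A s).det = (M s).det := by
    intro s
    rw [hM]
    rw [LinearMap.det_toMatrix]
  have hentry : ∀ i j, HasDerivAt (fun s => M s i j) (N i j) t := by
    intro i j
    have h1 : HasDerivAt (fun s => A s (b j)) ((L ∘L A t) (b j)) t := by
      have := (ContinuousLinearMap.apply ℝ (EuclideanSpace ℝ (Fin d))
        (b j)).hasFDerivAt.comp_hasDerivAt t hA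
      exact this
    have h2 : HasDerivAt (fun s => (A s (b j)) i) (((L ∘L A t) (b j)) i) t := by
      have := (EuclideanSpace.proj (𝕜 := ℝ) i).hasFDerivAt.comp_hasDerivAt t h1
      exact this
    have hMval : ∀ s, M s i j = (A s (b j)) i := by
      intro s
      rw [hM]
      simp [LinearMap.toMatrix_apply, hb]
    have hNval : N i j = ((L ∘L A t) (b j)) i := by
      rw [hN]
      simp [LinearMap.toMatrix_apply, hb]
    rw [hNval]
    refine h2.congr_of_eventuallyEq ?_
    filter_upwards with s using (hMval s)
  have hdd := hasDerivAt_matrix_det hentry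
  have hNM : N = (LinearMap.toMatrix b b
      (L : EuclideanSpace ℝ (Fin d) →ₗ[ℝ] EuclideanSpace ℝ (Fin d))) * M t := by
    rw [hN, hM, ← LinearMap.toMatrix_comp b b b]
    rfl
  have htr : ∑ i, (LinearMap.toMatrix b b
      (L : EuclideanSpace ℝ (Fin d) →ₗ[ℝ] EuclideanSpace ℝ (Fin d))) i i
        = ∑ i, L (EuclideanSpace.single i 1) i := by
    refine Finset.sum_congr rfl fun i _ => ?_
    simp [LinearMap.toMatrix_apply, hb, EuclideanSpace.basisFun_apply]
  have : ∑ i, ((M t).updateRow i (N i)).det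
      = (∑ i, L (EuclideanSpace.single i 1) i) * (M t).det := by
    rw [hNM, sum_det_updateRow_mul, htr]
  rw [this] at hdd
  rw [hdet t]
  refine hdd.congr_of_eventuallyEq ?_
  filter_upwards with s using (hdet s)

lemma pos_of_continuous_ne_zero {g : ℝ → ℝ} (hg : Continuous g) (h0 : g 0 = 1)
    (hne : ∀ s, g s ≠ 0) : ∀ s, 0 < g s := by
  intro s
  by_contra hle
  push_neg at hle
  have hlt : g s < 0 := lt_of_le_of_ne hle (hne s)
  have hmem : (0 : ℝ) ∈ uIcc (g 0) (g s) := by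
    rw [mem_uIcc]
    right
    exact ⟨hlt.le, by rw [h0]; norm_num⟩
  obtain ⟨c, _, hgc⟩ := intermediate_value_uIcc hg.continuousOn hmem
  exact hne c hgc


/-- Reynolds transport theorem.  Let `Ω ⊂ ℝ^d` be a bounded open set, `v` a `C¹` velocity
field, and `Φ` a jointly `C¹` flow map with `Φ(ξ,0) = ξ`, `ξ ↦ Φ(ξ,t)` injective with
invertible spatial differential at every point, and `∂Φ/∂t(ξ,t) = v(Φ(ξ,t), t)`.
Then for every `C¹` function `f` and every time `t`, the map
`s ↦ ∫_{Φ(Ω,s)} f(x,s) dx` is differentiable at `t` with derivative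
`∫_{Φ(Ω,t)} [∂f/∂t(x,t) + ∇_x f(x,t)·v(x,t) + f(x,t) div_x v(x,t)] dx`. -/
theorem reynolds_transport (d : ℕ) (hd : 1 ≤ d)
    (Ω : Set (EuclideanSpace ℝ (Fin d))) (hΩopen : IsOpen Ω) (hΩbdd : Bornology.IsBounded Ω)
    (v : EuclideanSpace ℝ (Fin d) × ℝ → EuclideanSpace ℝ (Fin d)) (hv : ContDiff ℝ 1 v)
    (Φ : EuclideanSpace ℝ (Fin d) × ℝ → EuclideanSpace ℝ (Fin d)) (hΦ : ContDiff ℝ 1 Φ)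
    (hΦ0 : ∀ ξ, Φ (ξ, 0) = ξ)
    (hΦinj : ∀ t : ℝ, Function.Injective (fun ξ => Φ (ξ, t)))
    (hΦinv : ∀ (ξ : EuclideanSpace ℝ (Fin d)) (t : ℝ),
      ∃ L : EuclideanSpace ℝ (Fin d) ≃L[ℝ] EuclideanSpace ℝ (Fin d),
        (L : EuclideanSpace ℝ (Fin d) →L[ℝ] EuclideanSpace ℝ (Fin d))
          = fderiv ℝ (fun η => Φ (η, t)) ξ)
    (hflow : ∀ (ξ : EuclideanSpace ℝ (Fin d)) (t : ℝ),
      HasDerivAt (fun s => Φ (ξ, s)) (v (Φ (ξ, t), t)) t)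
    (f : EuclideanSpace ℝ (Fin d) × ℝ → ℝ) (hf : ContDiff ℝ 1 f) :
    ∀ t : ℝ,
      HasDerivAt (fun s => ∫ x in (fun ξ => Φ (ξ, s)) '' Ω, f (x, s))
        (∫ x in (fun ξ => Φ (ξ, t)) '' Ω,
          (deriv (fun s => f (x, s)) t
            + (fderiv ℝ (fun y => f (y, t)) x (v (x, t))
              + f (x, t) * ∑ i : Fin d,
                  fderiv ℝ (fun y => v (y, t) i) x (EuclideanSpace.single i 1)))) t := by
  classical
  intro t
  have hΦdiff : Differentiable ℝ Φ := hΦ.differentiable one_ne_zero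
  have hvdiff : Differentiable ℝ v := hv.differentiable one_ne_zero
  have hfdiff : Differentiable ℝ f := hf.differentiable one_ne_zero
  -- spatial differential of the flow
  set A : EuclideanSpace ℝ (Fin d) × ℝ →
      (EuclideanSpace ℝ (Fin d) →L[ℝ] EuclideanSpace ℝ (Fin d)) :=
    fun p => (fderiv ℝ Φ p).comp (ContinuousLinearMap.inl ℝ _ ℝ) with hAdef
  have hA_cont : Continuous A :=
    Continuous.clm_comp (hΦ.continuous_fderiv one_ne_zero) continuous_const
  have hAΦ : ∀ ξ s, HasFDerivAt (fun η => Φ (η, s)) (A (ξ, s)) ξ := fun ξ s =>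
    (hΦdiff (ξ, s)).hasFDerivAt.comp ξ (hasFDerivAt_prodMk_left ξ s)
  -- Jacobian determinant
  set δ : EuclideanSpace ℝ (Fin d) × ℝ → ℝ := fun p => (A p).det with hδdef
  have hδcont : Continuous δ := ContinuousLinearMap.continuous_det.comp hA_cont
  -- material velocity
  set w : EuclideanSpace ℝ (Fin d) × ℝ → EuclideanSpace ℝ (Fin d) :=
    fun p => v (Φ p, p.2) with hwdef
  have hw : ContDiff ℝ 1 w := hv.comp (hΦ.prodMk contDiff_snd)
  -- spatial differential of velocity
  set Cv : EuclideanSpace ℝ (Fin d) × ℝ →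
      (EuclideanSpace ℝ (Fin d) →L[ℝ] EuclideanSpace ℝ (Fin d)) :=
    fun q => (fderiv ℝ v q).comp (ContinuousLinearMap.inl ℝ _ ℝ) with hCvdef
  have hCv_cont : Continuous Cv :=
    Continuous.clm_comp (hv.continuous_fderiv one_ne_zero) continuous_const
  have hCvq : ∀ x s, HasFDerivAt (fun y => v (y, s)) (Cv (x, s)) x := fun x s =>
    (hvdiff (x, s)).hasFDerivAt.comp x (hasFDerivAt_prodMk_left x s)
  set B : EuclideanSpace ℝ (Fin d) × ℝ →
      (EuclideanSpace ℝ (Fin d) →L[ℝ] EuclideanSpace ℝ (Fin d)) :=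
    fun p => (Cv (Φ p, p.2)).comp (A p) with hBdef
  have hΦs_cont : Continuous (fun p : EuclideanSpace ℝ (Fin d) × ℝ => (Φ p, p.2)) :=
    hΦ.continuous.prodMk continuous_snd
  have hB_cont : Continuous B :=
    Continuous.clm_comp (hCv_cont.comp hΦs_cont) hA_cont
  have hBw : ∀ ξ s, HasFDerivAt (fun η => w (η, s)) (B (ξ, s)) ξ := fun ξ s => by
    have h := (hCvq (Φ (ξ, s)) s).comp ξ (hAΦ ξ s); exact h
  -- integral representation of the flow
  have hwint : ∀ (ξ : EuclideanSpace ℝ (Fin d)) (a c : ℝ),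
      IntervalIntegrable (fun τ => w (ξ, τ)) volume a c := fun ξ a c =>
    ((hw.continuous.comp (continuous_const.prodMk continuous_id)).continuousOn).intervalIntegrable
  have hBcurve_cont : ∀ ξ : EuclideanSpace ℝ (Fin d),
      Continuous fun τ : ℝ => B (ξ, τ) := fun ξ =>
    hB_cont.comp (continuous_const.prodMk continuous_id)
  have hBint : ∀ (ξ : EuclideanSpace ℝ (Fin d)) (a c : ℝ),
      IntervalIntegrable (fun τ => B (ξ, τ)) volume a c := fun ξ a c =>
    ((hBcurve_cont ξ).continuousOn).intervalIntegrable
  have hΦrepr : ∀ ξ s, Φ (ξ, s) = ξ + ∫ τ in (0:ℝ)..s, w (ξ, τ) := by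
    intro ξ s
    have h := intervalIntegral.integral_eq_sub_of_hasDerivAt
      (f := fun r => Φ (ξ, r)) (f' := fun τ => w (ξ, τ))
      (fun τ _ => hflow ξ τ) (hwint ξ 0 s)
    have h' : ∫ τ in (0:ℝ)..s, w (ξ, τ) = Φ (ξ, s) - ξ := by simpa [hΦ0 ξ] using h
    rw [h']
    abel
  have hAint : ∀ ξ s, A (ξ, s)
      = ContinuousLinearMap.id ℝ (EuclideanSpace ℝ (Fin d)) + ∫ τ in (0:ℝ)..s, B (ξ, τ) := by
    intro ξ s
    obtain ⟨C, hC⟩ := IsCompact.exists_bound_of_continuousOn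
      ((isCompact_closedBall ξ 1).prod (isCompact_uIcc (a := (0:ℝ)) (b := s)))
      hB_cont.continuousOn
    have hint : HasFDerivAt (fun η => ∫ τ in (0:ℝ)..s, w (η, τ))
        (∫ τ in (0:ℝ)..s, B (ξ, τ)) ξ := by
      refine intervalIntegral.hasFDerivAt_integral_of_dominated_of_fderiv_le
        (F := fun η τ => w (η, τ)) (F' := fun η τ => B (η, τ)) (bound := fun _ => C)
        (Metric.ball_mem_nhds ξ zero_lt_one) ?_ (hwint ξ 0 s) ?_ ?_ ?_ ?_
      · filter_upwards with η
        exact ((hw.continuous.comp (continuous_const.prodMk continuous_id))).aestronglyMeasurable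
      · exact (hBcurve_cont ξ).aestronglyMeasurable
      · filter_upwards with τ hτ
        intro x hx
        exact hC (x, τ) ⟨Metric.ball_subset_closedBall hx, Set.uIoc_subset_uIcc hτ⟩
      · exact intervalIntegrable_const
      · filter_upwards with τ hτ
        intro x _
        exact hBw x τ
    have h2 : HasFDerivAt (fun η => Φ (η, s))
        (ContinuousLinearMap.id ℝ (EuclideanSpace ℝ (Fin d)) + ∫ τ in (0:ℝ)..s, B (ξ, τ)) ξ := by
      have h3 := (hasFDerivAt_id ξ).add hint
      refine h3.congr_of_eventuallyEq ?_
      filter_upwards with η using (hΦrepr η s)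
    exact (hAΦ ξ s).unique h2
  -- time derivative of the spatial differential
  have hAderiv : ∀ ξ s, HasDerivAt (fun r => A (ξ, r)) (B (ξ, s)) s := by
    intro ξ s
    have h1 : HasDerivAt (fun r => ∫ τ in (0:ℝ)..r, B (ξ, τ)) (B (ξ, s)) s :=
      intervalIntegral.integral_hasDerivAt_right (hBint ξ 0 s)
        ((hBcurve_cont ξ).stronglyMeasurable.stronglyMeasurableAtFilter)
        (hBcurve_cont ξ).continuousAt
    have h2 : (fun r => A (ξ, r))
        = fun r => ContinuousLinearMap.id ℝ (EuclideanSpace ℝ (Fin d))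
            + ∫ τ in (0:ℝ)..r, B (ξ, τ) := funext fun r => hAint ξ r
    rw [h2]
    exact h1.const_add _
  -- positivity of the Jacobian
  have hδ0 : ∀ ξ, A (ξ, 0) = ContinuousLinearMap.id ℝ (EuclideanSpace ℝ (Fin d)) := by
    intro ξ
    have hid : HasFDerivAt (fun η => Φ (η, (0:ℝ)))
        (ContinuousLinearMap.id ℝ (EuclideanSpace ℝ (Fin d))) ξ := by
      have h : (fun η => Φ (η, (0:ℝ))) = id := funext hΦ0
      rw [h]
      exact hasFDerivAt_id ξ
    exact (hAΦ ξ 0).unique hid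
  have hδne : ∀ ξ s, δ (ξ, s) ≠ 0 := by
    intro ξ s
    obtain ⟨L, hL⟩ := hΦinv ξ s
    have hAL : A (ξ, s) = (L : EuclideanSpace ℝ (Fin d) →L[ℝ] EuclideanSpace ℝ (Fin d)) := by
      rw [hL, (hAΦ ξ s).fderiv]
    have : δ (ξ, s) = LinearMap.det
        ((L.toLinearEquiv : EuclideanSpace ℝ (Fin d) ≃ₗ[ℝ] EuclideanSpace ℝ (Fin d)) :
          EuclideanSpace ℝ (Fin d) →ₗ[ℝ] EuclideanSpace ℝ (Fin d)) := by
      rw [hδdef]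
      simp only [hAL]
      rfl
    rw [this]
    exact (LinearEquiv.isUnit_det' _).ne_zero
  have hδpos : ∀ ξ s, 0 < δ (ξ, s) := by
    intro ξ s
    refine pos_of_continuous_ne_zero (g := fun r => δ (ξ, r))
      (hδcont.comp (continuous_const.prodMk continuous_id)) ?_ (fun r => hδne ξ r) s
    show δ (ξ, 0) = 1
    rw [hδdef]
    simp only [hδ0 ξ]
    simp [ContinuousLinearMap.det]
  -- trace of the velocity gradient
  set tr : EuclideanSpace ℝ (Fin d) × ℝ → ℝ :=
    fun q => ∑ i, Cv q (EuclideanSpace.single i 1) i with htrdef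
  have htr_cont : Continuous tr := by
    refine continuous_finset_sum _ fun i _ => ?_
    exact ((EuclideanSpace.proj (𝕜 := ℝ) i).continuous).comp
      (hCv_cont.clm_apply continuous_const)
  -- derivative of the Jacobian: Jacobi's formula
  have hδderiv : ∀ ξ s, HasDerivAt (fun r => δ (ξ, r)) (tr (Φ (ξ, s), s) * δ (ξ, s)) s := by
    intro ξ s
    exact hasDerivAt_clm_det (A := fun r => A (ξ, r)) (L := Cv (Φ (ξ, s), s)) (hAderiv ξ s)
  -- integrand after change of variables and its time derivative
  set F : EuclideanSpace ℝ (Fin d) × ℝ → ℝ := fun p => δ p * f (Φ p, p.2) with hFdef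
  set G : EuclideanSpace ℝ (Fin d) × ℝ → ℝ := fun p =>
    tr (Φ p, p.2) * δ p * f (Φ p, p.2) + δ p * (fderiv ℝ f (Φ p, p.2)) (w p, 1) with hGdef
  have hFcont : Continuous F := hδcont.mul (hf.continuous.comp hΦs_cont)
  have hGcont : Continuous G := by
    refine Continuous.add ?_ ?_
    · exact ((htr_cont.comp hΦs_cont).mul hδcont).mul (hf.continuous.comp hΦs_cont)
    · refine hδcont.mul ?_
      exact Continuous.clm_apply ((hf.continuous_fderiv one_ne_zero).comp hΦs_cont)
        (hw.continuous.prodMk continuous_const)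
  have hfΦderiv : ∀ ξ s, HasDerivAt (fun r => f (Φ (ξ, r), r))
      ((fderiv ℝ f (Φ (ξ, s), s)) (w (ξ, s), 1)) s := by
    intro ξ s
    have h1 : HasDerivAt (fun r => (Φ (ξ, r), r)) (w (ξ, s), 1) s :=
      (hflow ξ s).prodMk (hasDerivAt_id s)
    exact (hfdiff _).hasFDerivAt.comp_hasDerivAt s h1
  have hFderiv : ∀ ξ s, HasDerivAt (fun r => F (ξ, r)) (G (ξ, s)) s := by
    intro ξ s
    exact (hδderiv ξ s).mul (hfΦderiv ξ s)
  -- measure-theoretic facts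
  have hΩmeas : MeasurableSet Ω := hΩopen.measurableSet
  have hclosure : IsCompact (closure Ω) :=
    Metric.isCompact_of_isClosed_isBounded isClosed_closure hΩbdd.closure
  have hΩfin : volume Ω < ⊤ :=
    lt_of_le_of_lt (measure_mono subset_closure) hclosure.measure_lt_top
  haveI : IsFiniteMeasure (volume.restrict Ω) :=
    ⟨by rwa [Measure.restrict_apply_univ]⟩
  -- change of variables
  have hCoV : ∀ (s : ℝ) (g : EuclideanSpace ℝ (Fin d) → ℝ),
      ∫ x in (fun ξ => Φ (ξ, s)) '' Ω, g x = ∫ ξ in Ω, |δ (ξ, s)| * g (Φ (ξ, s)) := by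
    intro s g
    have h := integral_image_eq_integral_abs_det_fderiv_smul volume hΩmeas
      (fun ξ _ => (hAΦ ξ s).hasFDerivWithinAt) ((hΦinj s).injOn) g
    simpa [smul_eq_mul] using h
  -- differentiation under the integral sign
  obtain ⟨CG, hCG⟩ := IsCompact.exists_bound_of_continuousOn
    (hclosure.prod (isCompact_Icc (a := t - 1) (b := t + 1))) hGcont.continuousOn
  have hFs_int : ∀ s : ℝ, Integrable (fun ξ => F (ξ, s)) (volume.restrict Ω) := by
    intro s
    have h1 : IntegrableOn (fun ξ => F (ξ, s)) (closure Ω) volume :=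
      ((hFcont.comp (continuous_id.prodMk continuous_const)).continuousOn).integrableOn_compact
        hclosure
    exact h1.mono_set subset_closure
  have key := hasDerivAt_integral_of_dominated_loc_of_deriv_le
    (μ := volume.restrict Ω) (F := fun s ξ => F (ξ, s)) (F' := fun s ξ => G (ξ, s))
    (x₀ := t) (bound := fun _ => CG) (Metric.ball_mem_nhds t zero_lt_one)
    (by
      filter_upwards with s
      exact ((hFcont.comp (continuous_id.prodMk continuous_const))).aestronglyMeasurable)
    (hFs_int t)
    ((hGcont.comp (continuous_id.prodMk continuous_const)).aestronglyMeasurable)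
    (by
      filter_upwards [ae_restrict_mem hΩmeas] with ξ hξ
      intro s hs
      refine hCG (ξ, s) ⟨subset_closure hξ, ?_⟩
      have := Metric.mem_ball.1 hs
      rw [Real.dist_eq] at this
      constructor <;> [linarith [abs_lt.1 this]; linarith [abs_lt.1 this]])
    (integrable_const CG)
    (by
      filter_upwards with ξ
      intro s _
      exact hFderiv ξ s)
  have hDI : HasDerivAt (fun s => ∫ ξ in Ω, F (ξ, s)) (∫ ξ in Ω, G (ξ, t)) t := key.2
  -- identify the function being differentiated
  have hre : (fun s => ∫ x in (fun ξ => Φ (ξ, s)) '' Ω, f (x, s))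
      = fun s => ∫ ξ in Ω, F (ξ, s) := by
    funext s
    rw [hCoV s (fun x => f (x, s))]
    refine integral_congr_ae (Filter.Eventually.of_forall fun ξ => ?_)
    show |δ (ξ, s)| * f (Φ (ξ, s), s) = F (ξ, s)
    rw [abs_of_pos (hδpos ξ s)]
  -- identify the value of the derivative
  have hderiv_t : ∀ x : EuclideanSpace ℝ (Fin d),
      deriv (fun s => f (x, s)) t = (fderiv ℝ f (x, t)) (0, 1) := by
    intro x
    have h1 : HasDerivAt (fun s : ℝ => (x, s))
        ((0 : EuclideanSpace ℝ (Fin d)), (1:ℝ)) t := (hasDerivAt_const t x).prodMk (hasDerivAt_id t)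
    exact ((hfdiff _).hasFDerivAt.comp_hasDerivAt t h1).deriv
  have hfd_x : ∀ x : EuclideanSpace ℝ (Fin d),
      fderiv ℝ (fun y => f (y, t)) x
        = (fderiv ℝ f (x, t)).comp (ContinuousLinearMap.inl ℝ _ ℝ) := fun x =>
    ((hfdiff _).hasFDerivAt.comp x (hasFDerivAt_prodMk_left x t)).fderiv
  have hvd_x : ∀ (x : EuclideanSpace ℝ (Fin d)) (i : Fin d),
      fderiv ℝ (fun y => v (y, t) i) x (EuclideanSpace.single i 1)
        = (Cv (x, t) (EuclideanSpace.single i 1)) i := by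
    intro x i
    have h2 : HasFDerivAt (fun y => v (y, t) i)
        ((EuclideanSpace.proj (𝕜 := ℝ) i).comp (Cv (x, t))) x :=
      (EuclideanSpace.proj (𝕜 := ℝ) i).hasFDerivAt.comp x (hCvq x t)
    rw [h2.fderiv]
    rfl
  have hval : ∫ ξ in Ω, G (ξ, t)
      = ∫ x in (fun ξ => Φ (ξ, t)) '' Ω,
          (deriv (fun s => f (x, s)) t
            + (fderiv ℝ (fun y => f (y, t)) x (v (x, t))
              + f (x, t) * ∑ i : Fin d,
                  fderiv ℝ (fun y => v (y, t) i) x (EuclideanSpace.single i 1))) := by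
    rw [hCoV t]
    refine integral_congr_ae (Filter.Eventually.of_forall fun ξ => ?_)
    show G (ξ, t) = |δ (ξ, t)| * _
    rw [abs_of_pos (hδpos ξ t)]
    set x := Φ (ξ, t) with hx
    have e1 : deriv (fun s => f (x, s)) t = (fderiv ℝ f (x, t)) (0, 1) := hderiv_t x
    have e2 : fderiv ℝ (fun y => f (y, t)) x (v (x, t))
        = (fderiv ℝ f (x, t)) (v (x, t), 0) := by rw [hfd_x x]; rfl
    have e3 : (∑ i : Fin d, fderiv ℝ (fun y => v (y, t) i) x (EuclideanSpace.single i 1))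
        = tr (x, t) := by
      rw [htrdef]
      exact Finset.sum_congr rfl fun i _ => hvd_x x i
    have e4 : (fderiv ℝ f (x, t)) (v (x, t), 0) + (fderiv ℝ f (x, t)) (0, 1)
        = (fderiv ℝ f (x, t)) (v (x, t), 1) := by
      rw [← map_add]
      norm_num
    have hwx : w (ξ, t) = v (x, t) := rfl
    have hΦx : (Φ (ξ, t), t) = (x, t) := rfl
    rw [hGdef]
    simp only [hΦx, hwx, e1, e2, e3]
    ring_nf
    rw [← e4]
    ring
  rw [hre, ← hval]
  exact hDI
end
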